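/- For all x, t, t' ∈ εℤ with t > t' > 0: a₁(x,t,m,ε) = Σ_{x'∈εℤ} [a₂(x',t',m,ε)·a₁(x−x'+ε, t−t'+ε, m, ε) + a₁(x',t',m,ε)·a₂(x'−x+ε, t−t'+ε, m, ε)] and a₂(x,t,m,ε) = Σ_{x'∈εℤ} [a₂(x',t',m,ε)·a₂(x−x'+ε, t−t'+ε, m, ε) − a₁(x',t',m,ε)·a₁(x'−x+ε, t−t'+ε, m, ε)]. -/

import Mathlib

open scoped BigOperators

/-- The final x-coordinate of a checker path from `(0,0)` encoded by its sequence of moves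
(`true` = move `(1,1)`, `false` = move `(-1,1)`). -/
def moveEndpoint {n : ℕ} (d : Fin n → Bool) : ℤ :=
  ∑ k, (if d k then (1 : ℤ) else -1)

/-- The number of turns of a checker path encoded by its sequence of moves. -/
def nturns {n : ℕ} (d : Fin n → Bool) : ℕ :=
  ((List.ofFn d).zip (List.ofFn d).tail).countP fun p => p.1 != p.2

/-- Checker paths from `(0,0)` to `(x,t)` whose first step is to `(1,1)`,
encoded by their sequences of moves. -/
def cpaths (x t : ℤ) : Finset (Fin t.toNat → Bool) :=
  Finset.univ.filter fun d => moveEndpoint d = x ∧ (List.ofFn d).headI = true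

/-- Feynman checkers amplitude with mass: `a(x·ε, t·ε, m, ε)` written in lattice
coordinates, i.e. `am m ε x t = (1+m²ε²)^((1-t)/2) * i * ∑ₛ (-i·m·ε)^turns(s)`. -/
noncomputable def am (m ε : ℝ) (x t : ℤ) : ℂ :=
  (Real.sqrt (1 + m ^ 2 * ε ^ 2) : ℂ) ^ (1 - t) * Complex.I *
    ∑ d ∈ cpaths x t, (-Complex.I * (m * ε)) ^ nturns d


/-! ### Auxiliary machinery -/

private def lturns : List Bool → ℕ
  | a :: b :: l => (if a != b then 1 else 0) + lturns (b :: l)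
  | _ => 0

private lemma countP_zip_tail (l : List Bool) :
    (l.zip l.tail).countP (fun p => p.1 != p.2) = lturns l := by
  match l with
  | [] => simp [lturns]
  | [a] => simp [lturns]
  | a :: b :: r =>
    have ih := countP_zip_tail (b :: r)
    simp only [List.tail_cons, List.zip_cons_cons, List.countP_cons, lturns] at *
    rw [← ih]; rcases Bool.decide_iff (a != b) |>.mpr with _ <;> cases a <;> cases b <;> simp <;> omega

private lemma lturns_concat (l : List Bool) (b : Bool) :
    lturns (l ++ [b]) = lturns l + (if l.getLastD b != b then 1 else 0) := by
  induction l with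
  | nil => simp [lturns]
  | cons a l ih =>
    cases l with
    | nil => simp [lturns]
    | cons c r =>
      show lturns (a :: c :: (r ++ [b])) = _
      rw [lturns, show c :: (r ++ [b]) = (c :: r) ++ [b] from rfl, ih, lturns]
      simp [List.getLastD]
      omega

private lemma lturns_mod_two (a : Bool) (l : List Bool) :
    lturns (a :: l) % 2 = if (a :: l).getLastD true = a then 0 else 1 := by
  induction l generalizing a with
  | nil => simp [lturns]
  | cons b r ih =>
    rw [lturns, Nat.add_mod, ih b]
    have : (a :: b :: r).getLastD true = (b :: r).getLastD true := by simp [List.getLastD]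
    rw [this]
    rcases Bool.eq_false_or_eq_true ((b :: r).getLastD true) with h | h <;>
      rw [h] <;> cases a <;> cases b <;> simp

private lemma nturns_eq_lturns {n : ℕ} (d : Fin n → Bool) : nturns d = lturns (List.ofFn d) :=
  countP_zip_tail _

private lemma ofFn_snoc {n : ℕ} (d : Fin n → Bool) (b : Bool) :
    List.ofFn (Fin.snoc d b) = List.ofFn d ++ [b] := by
  rw [List.ofFn_succ']
  simp [Fin.snoc_castSucc, Fin.snoc_last, List.concat_eq_append]

private lemma moveEndpoint_snoc {n : ℕ} (d : Fin n → Bool) (b : Bool) :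
    moveEndpoint (Fin.snoc d b) = moveEndpoint d + (if b then (1:ℤ) else -1) := by
  unfold moveEndpoint
  rw [Fin.sum_univ_castSucc]
  simp [Fin.snoc_castSucc, Fin.snoc_last]

private lemma nturns_snoc {n : ℕ} (d : Fin n → Bool) (b : Bool) :
    nturns (Fin.snoc d b) = nturns d + (if (List.ofFn d).getLastD b != b then 1 else 0) := by
  rw [nturns_eq_lturns, nturns_eq_lturns, ofFn_snoc, lturns_concat]

/-- paths with a prescribed last step -/
private def cpathsL (x : ℤ) (n : ℕ) (b : Bool) : Finset (Fin n → Bool) :=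
  Finset.univ.filter fun d =>
    moveEndpoint d = x ∧ (List.ofFn d).headI = true ∧ (List.ofFn d).getLast? = some b

private lemma cpaths_eq_union (x t : ℤ) (ht : 1 ≤ t) :
    cpaths x t = cpathsL x t.toNat true ∪ cpathsL x t.toNat false := by
  ext d
  have hlen : (List.ofFn d).length = t.toNat := by simp
  have hne : List.ofFn d ≠ [] := by
    intro h; rw [h] at hlen; simp at hlen; omega
  simp only [cpaths, cpathsL, Finset.mem_filter, Finset.mem_union, Finset.mem_univ, true_and]
  rcases h : (List.ofFn d).getLast? with _ | c
  · exact absurd (List.getLast?_eq_none_iff.mp h) hne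
  · cases c <;> tauto

private lemma cpathsL_disjoint (x : ℤ) (n : ℕ) :
    Disjoint (cpathsL x n true) (cpathsL x n false) := by
  rw [Finset.disjoint_left]
  intro d h1 h2
  simp only [cpathsL, Finset.mem_filter] at h1 h2
  rw [h1.2.2.2] at h2
  exact absurd h2.2.2.2 (by simp)

private lemma headI_append_singleton (l : List Bool) (b : Bool) (h : l ≠ []) :
    (l ++ [b]).headI = l.headI := by
  cases l with
  | nil => exact absurd rfl h
  | cons a r => rfl

private lemma getLastD_of_getLast? {l : List Bool} {c : Bool} (h : l.getLast? = some c) (b : Bool) :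
    l.getLastD b = c := by
  rw [List.getLastD_eq_getLast?, h]; rfl

private lemma mem_cpathsL {x : ℤ} {n : ℕ} {b : Bool} {d : Fin n → Bool} :
    d ∈ cpathsL x n b ↔
      moveEndpoint d = x ∧ (List.ofFn d).headI = true ∧ (List.ofFn d).getLast? = some b := by
  simp [cpathsL]

private lemma snoc_mem_cpathsL {x : ℤ} {n : ℕ} {b c : Bool} {e : Fin n → Bool} (hn : 1 ≤ n)
    (he : e ∈ cpathsL (x - (if b then (1:ℤ) else -1)) n c) :
    Fin.snoc e b ∈ cpathsL x (n + 1) b := by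
  rw [mem_cpathsL] at he ⊢
  have hne : List.ofFn e ≠ [] := by
    intro h
    have := congrArg List.length h
    simp at this; omega
  refine ⟨by rw [moveEndpoint_snoc, he.1]; ring, ?_, ?_⟩
  · rw [ofFn_snoc, headI_append_singleton _ _ hne]; exact he.2.1
  · rw [ofFn_snoc]; exact List.getLast?_concat

private lemma sum_cpathsL_succ (z : ℂ) (x : ℤ) (n : ℕ) (hn : 1 ≤ n) (b : Bool) :
    ∑ d ∈ cpathsL x (n + 1) b, z ^ nturns d =
      (∑ e ∈ cpathsL (x - (if b then (1:ℤ) else -1)) n b, z ^ nturns e) +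
      z * ∑ e ∈ cpathsL (x - (if b then (1:ℤ) else -1)) n (!b), z ^ nturns e := by
  set x' := x - (if b then (1:ℤ) else -1) with hx'
  have key : ∑ d ∈ cpathsL x (n + 1) b, z ^ nturns d =
      ∑ e ∈ cpathsL x' n true ∪ cpathsL x' n false, z ^ nturns (Fin.snoc e b) := by
    refine Finset.sum_nbij' (fun d => Fin.init d) (fun e => Fin.snoc e b) ?_ ?_ ?_ ?_ ?_
    · intro d hd
      rw [mem_cpathsL] at hd
      have hne : List.ofFn (Fin.init d) ≠ [] := by
        intro h
        have := congrArg List.length h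
        simp at this; omega
      have hd' : d = Fin.snoc (Fin.init d) (d (Fin.last n)) := (Fin.snoc_init_self d).symm
      have hlast : d (Fin.last n) = b := by
        have := hd.2.2
        rw [hd', ofFn_snoc, List.getLast?_concat] at this
        exact (Option.some_injective _ this)
      rw [hlast] at hd'
      have hend : moveEndpoint (Fin.init d) = x' := by
        have := hd.1
        rw [hd', moveEndpoint_snoc] at this
        rw [hx']; omega
      have hhead : (List.ofFn (Fin.init d)).headI = true := by
        have := hd.2.1
        rw [hd', ofFn_snoc, headI_append_singleton _ _ hne] at this
        exact this
      rcases h : (List.ofFn (Fin.init d)).getLast? with _ | c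
      · exact absurd (List.getLast?_eq_none_iff.mp h) hne
      · cases c
        · exact Finset.mem_union_right _ (mem_cpathsL.mpr ⟨hend, hhead, h⟩)
        · exact Finset.mem_union_left _ (mem_cpathsL.mpr ⟨hend, hhead, h⟩)
    · intro e he
      rw [Finset.mem_union] at he
      rcases he with he | he
      · exact snoc_mem_cpathsL hn he
      · exact snoc_mem_cpathsL hn he
    · intro d hd
      rw [mem_cpathsL] at hd
      have hd' : d = Fin.snoc (Fin.init d) (d (Fin.last n)) := (Fin.snoc_init_self d).symm
      have hlast : d (Fin.last n) = b := by
        have := hd.2.2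
        rw [hd', ofFn_snoc, List.getLast?_concat] at this
        exact (Option.some_injective _ this)
      conv_rhs => rw [hd', hlast]
    · intro e he
      simp
    · intro d hd
      have hd' : d = Fin.snoc (Fin.init d) (d (Fin.last n)) := (Fin.snoc_init_self d).symm
      rw [mem_cpathsL] at hd
      have hlast : d (Fin.last n) = b := by
        have := hd.2.2
        rw [hd', ofFn_snoc, List.getLast?_concat] at this
        exact (Option.some_injective _ this)
      conv_lhs => rw [hd', hlast]
  rw [key, Finset.sum_union (cpathsL_disjoint x' n)]
  have hpart : ∀ c, ∑ e ∈ cpathsL x' n c, z ^ nturns (Fin.snoc e b)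
      = (if c = b then 1 else z) * ∑ e ∈ cpathsL x' n c, z ^ nturns e := by
    intro c
    rw [Finset.mul_sum]
    refine Finset.sum_congr rfl fun e he => ?_
    rw [mem_cpathsL] at he
    rw [nturns_snoc, getLastD_of_getLast? he.2.2]
    cases c <;> cases b <;> simp [pow_succ] <;> ring
  rw [hpart, hpart]
  cases b <;> simp <;> ring

/-- amplitude restricted to paths with prescribed last step -/
private noncomputable def amb (m ε : ℝ) (x : ℤ) (n : ℕ) (b : Bool) : ℂ :=
  (Real.sqrt (1 + m ^ 2 * ε ^ 2) : ℂ) ^ (1 - (n : ℤ)) * Complex.I *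
    ∑ d ∈ cpathsL x n b, (-Complex.I * (m * ε)) ^ nturns d

private lemma am_split (m ε : ℝ) (x t : ℤ) (ht : 1 ≤ t) :
    am m ε x t = amb m ε x t.toNat true + amb m ε x t.toNat false := by
  unfold am amb
  rw [cpaths_eq_union x t ht, Finset.sum_union (cpathsL_disjoint x t.toNat),
    Int.toNat_of_nonneg (by omega), mul_add]

private lemma nturns_parity {x : ℤ} {n : ℕ} {b : Bool} {d : Fin n → Bool}
    (hd : d ∈ cpathsL x n b) : nturns d % 2 = if b then 0 else 1 := by
  rw [mem_cpathsL] at hd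
  have hne : List.ofFn d ≠ [] := by
    intro h; rw [h] at hd; exact (by simp at hd)
  obtain ⟨a, r, hl⟩ := List.exists_cons_of_ne_nil hne
  have ha : a = true := by have := hd.2.1; rw [hl] at this; exact this
  have hb : (a :: r).getLastD true = b := by
    rw [← hl]; exact getLastD_of_getLast? hd.2.2 _
  rw [nturns_eq_lturns, hl, lturns_mod_two, hb, ha]

private lemma even_pow_form (c : ℝ) (k : ℕ) (hk : k % 2 = 0) :
    ∃ y : ℝ, (-Complex.I * (c : ℂ)) ^ k = (y : ℂ) := by
  obtain ⟨j, hj⟩ : ∃ j, k = 2 * j := ⟨k / 2, by omega⟩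
  have h2 : (-Complex.I * (c : ℂ)) ^ 2 = ((-(c ^ 2) : ℝ) : ℂ) := by
    have h3 : (-Complex.I * (c : ℂ)) ^ 2 = Complex.I ^ 2 * (c : ℂ) ^ 2 := by ring
    rw [h3, Complex.I_sq]; push_cast; ring
  exact ⟨(-(c ^ 2)) ^ j, by rw [hj, pow_mul, h2, ← Complex.ofReal_pow]⟩

private lemma odd_pow_form (c : ℝ) (k : ℕ) (hk : k % 2 = 1) :
    ∃ y : ℝ, Complex.I * (-Complex.I * (c : ℂ)) ^ k = (y : ℂ) := by
  obtain ⟨j, hj⟩ : ∃ j, k = 2 * j + 1 := ⟨k / 2, by omega⟩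
  have h2 : (-Complex.I * (c : ℂ)) ^ 2 = ((-(c ^ 2) : ℝ) : ℂ) := by
    have h3 : (-Complex.I * (c : ℂ)) ^ 2 = Complex.I ^ 2 * (c : ℂ) ^ 2 := by ring
    rw [h3, Complex.I_sq]; push_cast; ring
  refine ⟨(-(c ^ 2)) ^ j * c, ?_⟩
  rw [hj, pow_succ, pow_mul, h2, ← Complex.ofReal_pow]
  have h4 : Complex.I * ((((-(c ^ 2)) ^ j : ℝ) : ℂ) * (-Complex.I * (c : ℂ)))
      = (((-(c ^ 2)) ^ j : ℝ) : ℂ) * (c : ℂ) * (-(Complex.I ^ 2)) := by ring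
  rw [h4, Complex.I_sq]; push_cast; ring

private lemma amb_true_form (m ε : ℝ) (x : ℤ) (n : ℕ) :
    ∃ y : ℝ, amb m ε x n true = (y : ℂ) * Complex.I := by
  set S := ∑ d ∈ cpathsL x n true, (-Complex.I * ((m * ε : ℝ) : ℂ)) ^ nturns d with hS
  have hSim : S.im = 0 := by
    rw [hS, Complex.im_sum]
    refine Finset.sum_eq_zero fun d hd => ?_
    obtain ⟨y, hy⟩ := even_pow_form (m * ε) (nturns d) (by simpa using nturns_parity hd)
    rw [hy]; simp
  obtain ⟨yv, hyv⟩ : ∃ y : ℝ, S = ((y : ℝ) : ℂ) :=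
    ⟨S.re, by apply Complex.ext <;> simp [hSim]⟩
  refine ⟨Real.sqrt (1 + m ^ 2 * ε ^ 2) ^ (1 - (n : ℤ)) * yv, ?_⟩
  unfold amb
  rw [show ((m : ℂ) * (ε : ℂ)) = ((m * ε : ℝ) : ℂ) by push_cast; ring, ← hS, hyv,
    ← Complex.ofReal_zpow]
  push_cast
  ring

private lemma amb_false_form (m ε : ℝ) (x : ℤ) (n : ℕ) :
    ∃ y : ℝ, amb m ε x n false = (y : ℂ) := by
  have key : ∃ y : ℝ, Complex.I * (∑ d ∈ cpathsL x n false,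
      (-Complex.I * ((m * ε : ℝ) : ℂ)) ^ nturns d) = (y : ℂ) := by
    rw [Finset.mul_sum]
    set T := ∑ d ∈ cpathsL x n false, Complex.I * (-Complex.I * ((m * ε : ℝ) : ℂ)) ^ nturns d
      with hT
    have hTim : T.im = 0 := by
      rw [hT, Complex.im_sum]
      refine Finset.sum_eq_zero fun d hd => ?_
      obtain ⟨y, hy⟩ := odd_pow_form (m * ε) (nturns d) (by simpa using nturns_parity hd)
      rw [hy]; simp
    exact ⟨T.re, by apply Complex.ext <;> simp [hTim]⟩
  obtain ⟨y, hy⟩ := key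
  refine ⟨Real.sqrt (1 + m ^ 2 * ε ^ 2) ^ (1 - (n : ℤ)) * y, ?_⟩
  unfold amb
  rw [show ((m : ℂ) * (ε : ℂ)) = ((m * ε : ℝ) : ℂ) by push_cast; ring, mul_assoc, hy,
    ← Complex.ofReal_zpow]
  push_cast
  ring

private lemma amb_succ (m ε : ℝ) (x : ℤ) (n : ℕ) (hn : 1 ≤ n) (b : Bool) :
    amb m ε x (n + 1) b = (Real.sqrt (1 + m ^ 2 * ε ^ 2) : ℂ)⁻¹ *
      (amb m ε (x - (if b then (1:ℤ) else -1)) n b +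
        (-Complex.I * (m * ε)) * amb m ε (x - (if b then (1:ℤ) else -1)) n (!b)) := by
  have hr0 : (0:ℝ) < Real.sqrt (1 + m ^ 2 * ε ^ 2) := Real.sqrt_pos.mpr (by positivity)
  have hr : ((Real.sqrt (1 + m ^ 2 * ε ^ 2) : ℝ) : ℂ) ≠ 0 := by
    simp [Complex.ofReal_ne_zero]; positivity
  unfold amb
  rw [sum_cpathsL_succ _ _ _ hn]
  have hexp : (1 - ((n : ℕ) + 1 : ℤ)) = (1 - (n : ℤ)) + (-1) := by push_cast; ring
  rw [show (1 - ((n + 1 : ℕ) : ℤ)) = (1 - (n : ℤ)) + (-1) by push_cast; ring,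
    zpow_add₀ hr, zpow_neg_one]
  ring

private lemma rec_setup (m ε : ℝ) (x t : ℤ) (ht : 1 ≤ t) :
    ∃ p1 p2 q1 q2 : ℝ,
      am m ε (x - 1) t = (q1 : ℂ) + (q2 : ℂ) * Complex.I ∧
      am m ε (x + 1) t = (p1 : ℂ) + (p2 : ℂ) * Complex.I ∧
      am m ε x (t + 1) = ((Real.sqrt (1 + m ^ 2 * ε ^ 2) : ℝ) : ℂ)⁻¹ *
        (((q2 : ℂ) * Complex.I + (-Complex.I * (m * ε)) * (q1 : ℂ)) +
         ((p1 : ℂ) + (-Complex.I * (m * ε)) * ((p2 : ℂ) * Complex.I))) := by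
  have hn : 1 ≤ t.toNat := by omega
  have h2 : (t + 1).toNat = t.toNat + 1 := by omega
  obtain ⟨q1, hq1⟩ := amb_false_form m ε (x - 1) t.toNat
  obtain ⟨q2, hq2⟩ := amb_true_form m ε (x - 1) t.toNat
  obtain ⟨p1, hp1⟩ := amb_false_form m ε (x + 1) t.toNat
  obtain ⟨p2, hp2⟩ := amb_true_form m ε (x + 1) t.toNat
  refine ⟨p1, p2, q1, q2, ?_, ?_, ?_⟩
  · rw [am_split m ε (x - 1) t ht, hq1, hq2]
    ring_nf
  · rw [am_split m ε (x + 1) t ht, hp1, hp2]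
    ring_nf
  · have hsplit := am_split m ε x (t + 1) (by omega)
    rw [h2, amb_succ m ε x t.toNat hn true, amb_succ m ε x t.toNat hn false] at hsplit
    norm_num [sub_neg_eq_add] at hsplit
    rw [hq1, hq2, hp1, hp2] at hsplit
    rw [hsplit]
    ring

private lemma rec_re (m ε : ℝ) (x t : ℤ) (ht : 1 ≤ t) :
    (am m ε x (t + 1)).re = (Real.sqrt (1 + m ^ 2 * ε ^ 2))⁻¹ *
      ((am m ε (x + 1) t).re + m * ε * (am m ε (x + 1) t).im) := by
  obtain ⟨p1, p2, q1, q2, hq, hp, hx⟩ := rec_setup m ε x t ht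
  rw [hx, hp, ← Complex.ofReal_inv]
  simp only [Complex.add_re, Complex.add_im, Complex.mul_re, Complex.mul_im, Complex.neg_re, Complex.neg_im, Complex.I_re, Complex.I_im, Complex.ofReal_re, Complex.ofReal_im]
  ring

private lemma rec_im (m ε : ℝ) (x t : ℤ) (ht : 1 ≤ t) :
    (am m ε x (t + 1)).im = (Real.sqrt (1 + m ^ 2 * ε ^ 2))⁻¹ *
      ((am m ε (x - 1) t).im - m * ε * (am m ε (x - 1) t).re) := by
  obtain ⟨p1, p2, q1, q2, hq, hp, hx⟩ := rec_setup m ε x t ht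
  rw [hx, hq, ← Complex.ofReal_inv]
  simp only [Complex.add_re, Complex.add_im, Complex.mul_re, Complex.mul_im, Complex.neg_re, Complex.neg_im, Complex.I_re, Complex.I_im, Complex.ofReal_re, Complex.ofReal_im]
  ring

private lemma cpathsL_one (x : ℤ) (b : Bool) :
    cpathsL x 1 b = if b = true ∧ x = 1 then {fun _ : Fin 1 => true} else ∅ := by
  ext d
  have hd0 : d = fun _ => d 0 := funext fun i => by rw [Subsingleton.elim i 0]
  have hofn : List.ofFn d = [d 0] := by
    rw [List.ofFn_succ]
    simp
  have hend : moveEndpoint d = if d 0 then 1 else -1 := by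
    unfold moveEndpoint
    rw [Fin.sum_univ_one]
  rw [mem_cpathsL, hofn, hend]
  constructor
  · rintro ⟨h1, h2, h3⟩
    have hd0t : d 0 = true := by simpa using h2
    have hb : b = true := by
      rw [hd0t] at h3
      simpa using h3.symm
    have hx : x = 1 := by
      rw [hd0t] at h1
      simpa using h1.symm
    rw [if_pos ⟨hb, hx⟩, Finset.mem_singleton, hd0, hd0t]
  · intro h
    by_cases hc : b = true ∧ x = 1
    · rw [if_pos hc, Finset.mem_singleton] at h
      subst h
      refine ⟨by simp [hc.2], by simp, by simp [hc.1]⟩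
    · rw [if_neg hc] at h
      exact absurd h (Finset.notMem_empty _)

private lemma am_one (m ε : ℝ) (x : ℤ) :
    am m ε x 1 = if x = 1 then Complex.I else 0 := by
  rw [am_split m ε x 1 le_rfl, show (1:ℤ).toNat = 1 from rfl]
  have h1 : amb m ε x 1 true = if x = 1 then Complex.I else 0 := by
    unfold amb
    rw [cpathsL_one]
    split
    · rename_i h
      rw [if_pos h.2]
      have hnt : nturns (fun _ : Fin 1 => true) = 0 := by
        simp [nturns, List.ofFn_succ]
      rw [Finset.sum_singleton, hnt]
      simp
    · rename_i h
      rw [if_neg (by tauto)]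
      simp
  have h2 : amb m ε x 1 false = 0 := by
    unfold amb
    rw [cpathsL_one]
    rw [if_neg (by simp)]
    simp
  rw [h1, h2, add_zero]

private lemma am_vanish (m ε : ℝ) (x t : ℤ) (h : (t.toNat : ℤ) < |x|) :
    am m ε x t = 0 := by
  unfold am
  have hemp : cpaths x t = ∅ := by
    rw [Finset.eq_empty_iff_forall_notMem]
    intro d hd
    simp only [cpaths, Finset.mem_filter] at hd
    have hb : |moveEndpoint d| ≤ (t.toNat : ℤ) := by
      calc |moveEndpoint d| ≤ ∑ k, |if d k then (1:ℤ) else -1| :=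
            Finset.abs_sum_le_sum_abs _ _
        _ ≤ ∑ _k : Fin t.toNat, 1 := by
            refine Finset.sum_le_sum fun k _ => ?_
            split <;> simp
        _ = t.toNat := by simp
    rw [hd.2.1] at hb
    omega
  rw [hemp]
  simp

private lemma am_two_re (m ε : ℝ) (y : ℤ) :
    (am m ε y 2).re = if y = 0 then m * ε * (Real.sqrt (1 + m ^ 2 * ε ^ 2))⁻¹ else 0 := by
  conv_lhs => rw [show (2:ℤ) = 1 + 1 from rfl, rec_re m ε y 1 le_rfl, am_one]
  rcases eq_or_ne y 0 with h | h
  · subst h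
    norm_num
    ring
  · rw [if_neg h, if_neg (show y + 1 ≠ 1 by omega)]
    simp

private lemma am_two_im (m ε : ℝ) (y : ℤ) :
    (am m ε y 2).im = if y = 2 then (Real.sqrt (1 + m ^ 2 * ε ^ 2))⁻¹ else 0 := by
  conv_lhs => rw [show (2:ℤ) = 1 + 1 from rfl, rec_im m ε y 1 le_rfl, am_one]
  rcases eq_or_ne y 2 with h | h
  · subst h
    norm_num
  · rw [if_neg h, if_neg (show y - 1 ≠ 1 by omega)]
    simp

private lemma am_out (m ε : ℝ) (x t : ℤ) (ht : 0 ≤ t) (h : t < |x|) : am m ε x t = 0 :=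
  am_vanish m ε x t (by rw [Int.toNat_of_nonneg ht]; exact h)

private lemma huygens_main (m ε : ℝ) (t' : ℤ) (ht' : 1 ≤ t') :
    ∀ n : ℕ, 1 ≤ n → ∀ x : ℤ,
      ((am m ε x (t' + n)).re = ∑ x' ∈ Finset.Icc (-t') t',
          ((am m ε x' t').im * (am m ε (x - x' + 1) ((n : ℤ) + 1)).re +
           (am m ε x' t').re * (am m ε (x' - x + 1) ((n : ℤ) + 1)).im)) ∧
      ((am m ε x (t' + n)).im = ∑ x' ∈ Finset.Icc (-t') t',
          ((am m ε x' t').im * (am m ε (x - x' + 1) ((n : ℤ) + 1)).im -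
           (am m ε x' t').re * (am m ε (x' - x + 1) ((n : ℤ) + 1)).re)) := by
  intro n hn
  set r := Real.sqrt (1 + m ^ 2 * ε ^ 2) with hr
  induction n, hn using Nat.le_induction with
  | base =>
    intro x
    simp only [Nat.cast_one]
    constructor
    · have hsum : ∑ x' ∈ Finset.Icc (-t') t',
          ((am m ε x' t').im * (am m ε (x - x' + 1) ((1 : ℤ) + 1)).re +
           (am m ε x' t').re * (am m ε (x' - x + 1) ((1 : ℤ) + 1)).im) =
          ∑ x' ∈ Finset.Icc (-t') t', (if x' = x + 1 then
            ((am m ε x' t').im * (m * ε * r⁻¹) + (am m ε x' t').re * r⁻¹) else 0) := by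
        refine Finset.sum_congr rfl fun x' _ => ?_
        rw [show (1:ℤ) + 1 = 2 from rfl, am_two_re, am_two_im]
        rcases eq_or_ne x' (x + 1) with h | h
        · rw [if_pos h, if_pos (by omega), if_pos (by omega)]
        · rw [if_neg h, if_neg (by omega), if_neg (by omega)]
          ring
      rw [hsum, Finset.sum_ite_eq' (Finset.Icc (-t') t') (x+1)]
      rw [rec_re m ε x t' ht', ← hr]
      by_cases hmem : x + 1 ∈ Finset.Icc (-t') t'
      · rw [if_pos hmem]
        ring
      · rw [if_neg hmem]
        rw [Finset.mem_Icc] at hmem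
        rw [am_out m ε (x+1) t' (by omega) (by rw [lt_abs]; omega)]
        simp
    · have hsum : ∑ x' ∈ Finset.Icc (-t') t',
          ((am m ε x' t').im * (am m ε (x - x' + 1) ((1 : ℤ) + 1)).im -
           (am m ε x' t').re * (am m ε (x' - x + 1) ((1 : ℤ) + 1)).re) =
          ∑ x' ∈ Finset.Icc (-t') t', (if x' = x - 1 then
            ((am m ε x' t').im * r⁻¹ - (am m ε x' t').re * (m * ε * r⁻¹)) else 0) := by
        refine Finset.sum_congr rfl fun x' _ => ?_
        rw [show (1:ℤ) + 1 = 2 from rfl, am_two_re, am_two_im]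
        rcases eq_or_ne x' (x - 1) with h | h
        · rw [if_pos h, if_pos (by omega), if_pos (by omega)]
        · rw [if_neg h, if_neg (by omega), if_neg (by omega)]
          ring
      rw [hsum, Finset.sum_ite_eq' (Finset.Icc (-t') t') (x-1)]
      rw [rec_im m ε x t' ht', ← hr]
      by_cases hmem : x - 1 ∈ Finset.Icc (-t') t'
      · rw [if_pos hmem]
        ring
      · rw [if_neg hmem]
        rw [Finset.mem_Icc] at hmem
        rw [am_out m ε (x-1) t' (by omega) (by rw [lt_abs]; omega)]
        simp
  | succ n hn IH =>
    intro x
    have hT : (1:ℤ) ≤ (n : ℤ) + 1 := by omega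
    have htn : (1:ℤ) ≤ t' + n := by omega
    have e1 : t' + ((n + 1 : ℕ) : ℤ) = (t' + (n : ℤ)) + 1 := by push_cast; ring
    have e2 : ((n + 1 : ℕ) : ℤ) + 1 = ((n : ℤ) + 1) + 1 := by push_cast; ring
    constructor
    · rw [e1, rec_re m ε x (t' + n) htn, ← hr, (IH (x + 1)).1, (IH (x + 1)).2]
      simp only [show ∀ x' : ℤ, x + 1 - x' + 1 = (x - x' + 1) + 1 from fun _ => by ring,
        show ∀ x' : ℤ, x' - (x + 1) + 1 = (x' - x + 1) - 1 from fun _ => by ring]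
      rw [Finset.mul_sum, ← Finset.sum_add_distrib, Finset.mul_sum]
      refine Finset.sum_congr rfl fun x' _ => ?_
      rw [e2, rec_re m ε (x - x' + 1) ((n:ℤ) + 1) hT, rec_im m ε (x' - x + 1) ((n:ℤ) + 1) hT,
        ← hr]
      ring
    · rw [e1, rec_im m ε x (t' + n) htn, ← hr, (IH (x - 1)).1, (IH (x - 1)).2]
      simp only [show ∀ x' : ℤ, x - 1 - x' + 1 = (x - x' + 1) - 1 from fun _ => by ring,
        show ∀ x' : ℤ, x' - (x - 1) + 1 = (x' - x + 1) + 1 from fun _ => by ring]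
      rw [Finset.mul_sum, ← Finset.sum_sub_distrib, Finset.mul_sum]
      refine Finset.sum_congr rfl fun x' _ => ?_
      rw [e2, rec_im m ε (x - x' + 1) ((n:ℤ) + 1) hT, rec_re m ε (x' - x + 1) ((n:ℤ) + 1) hT,
        ← hr]
      ring

/-- Huygens' principle for the model with mass (lattice coordinates). -/
theorem huygens_principle (m ε : ℝ) (hε : 0 < ε) (hm : 0 ≤ m) (x t t' : ℤ)
    (h1 : t' < t) (h2 : 0 < t') :
    (am m ε x t).re =
      ∑' x' : ℤ, ((am m ε x' t').im * (am m ε (x - x' + 1) (t - t' + 1)).re +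
        (am m ε x' t').re * (am m ε (x' - x + 1) (t - t' + 1)).im) ∧
    (am m ε x t).im =
      ∑' x' : ℤ, ((am m ε x' t').im * (am m ε (x - x' + 1) (t - t' + 1)).im -
        (am m ε x' t').re * (am m ε (x' - x + 1) (t - t' + 1)).re) := by
  set f1 : ℤ → ℝ := fun x' => ((am m ε x' t').im * (am m ε (x - x' + 1) (t - t' + 1)).re +
      (am m ε x' t').re * (am m ε (x' - x + 1) (t - t' + 1)).im) with hf1
  set f2 : ℤ → ℝ := fun x' => ((am m ε x' t').im * (am m ε (x - x' + 1) (t - t' + 1)).im -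
      (am m ε x' t').re * (am m ε (x' - x + 1) (t - t' + 1)).re) with hf2
  have hzero : ∀ x' : ℤ, x' ∉ Finset.Icc (-t') t' → am m ε x' t' = 0 := by
    intro x' hx'
    rw [Finset.mem_Icc] at hx'
    exact am_out m ε x' t' (by omega) (by rw [lt_abs]; omega)
  have h1 : ∀ x' ∉ Finset.Icc (-t') t', f1 x' = 0 := by
    intro x' hx'
    rw [hf1]
    simp only []
    rw [hzero x' hx']
    simp
  have h2 : ∀ x' ∉ Finset.Icc (-t') t', f2 x' = 0 := by
    intro x' hx'
    rw [hf2]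
    simp only []
    rw [hzero x' hx']
    simp
  obtain ⟨n, hn⟩ : ∃ n : ℕ, t - t' = (n : ℤ) := ⟨(t - t').toNat, by omega⟩
  have hn1 : 1 ≤ n := by omega
  have key := huygens_main m ε t' (by omega) n hn1 x
  have et : t = t' + (n : ℤ) := by omega
  have eT : t - t' + 1 = (n : ℤ) + 1 := by omega
  constructor
  · rw [tsum_eq_sum h1, hf1]
    simp only [eT]
    rw [et]
    exact key.1
  · rw [tsum_eq_sum h2, hf2]
    simp only [eT]
    rw [et]
    exact key.2
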